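/- For every integer k ≥ 2, every finite color set T, every k-vertex T-edge-colored complete graph R, and every integer n ≥ k, one has I(R,n) ≥ (k!/(k^k − k))·binom(n,k). In particular the inducibility of R is at least k!/(k^k − k), as witnessed by iterated balanced blow-ups of R. -/

import Mathlib

open Finset Filter

open scoped Classical

section Defs

variable {T : Type}

/-- A coloring of the complete graph is symmetric. -/
def IsSym {V : Type} (χ : V → V → T) : Prop := ∀ u v, χ u v = χ v u

/-- `copyCount k n R χ` : the number of `k`-element subsets of `Fin n` whose coloring
induced by `χ` is isomorphic (as an edge-colored complete graph) to `R`. -/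
noncomputable def copyCount (k n : ℕ) (R : Fin k → Fin k → T) (χ : Fin n → Fin n → T) : ℕ :=
  ((Finset.powersetCard k (Finset.univ : Finset (Fin n))).filter
    (fun S => ∃ φ : Fin k → Fin n, Function.Injective φ ∧ (∀ a, φ a ∈ S) ∧
      ∀ a b : Fin k, a ≠ b → χ (φ a) (φ b) = R a b)).card

/-- `maxCopyCount k n R = I(R,n)` : the maximum of `copyCount` over all symmetric
`T`-colorings of the complete graph on `n` vertices. -/
noncomputable def maxCopyCount [Fintype T] (k n : ℕ) (R : Fin k → Fin k → T) : ℕ :=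
  Finset.sup ((Finset.univ : Finset (Fin n → Fin n → T)).filter (fun χ => IsSym χ))
    (fun χ => copyCount k n R χ)

/-- `vertDeg k n R χ x = d(x)` : the number of `k`-subsets containing `x` whose induced
coloring is isomorphic to `R`. -/
noncomputable def vertDeg (k n : ℕ) (R : Fin k → Fin k → T) (χ : Fin n → Fin n → T)
    (x : Fin n) : ℕ :=
  ((Finset.powersetCard k (Finset.univ : Finset (Fin n))).filter
    (fun S => x ∈ S ∧ ∃ φ : Fin k → Fin n, Function.Injective φ ∧ (∀ a, φ a ∈ S) ∧
      ∀ a b : Fin k, a ≠ b → χ (φ a) (φ b) = R a b)).card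

/-- `embCount k n R χ i x = d_i(x)` : the number of injective color-preserving maps
`φ : Fin k → Fin n` with `φ i = x`. -/
noncomputable def embCount (k n : ℕ) (R : Fin k → Fin k → T) (χ : Fin n → Fin n → T)
    (i : Fin k) (x : Fin n) : ℕ :=
  ((Finset.univ : Finset (Fin k → Fin n)).filter
    (fun φ => Function.Injective φ ∧ φ i = x ∧
      ∀ a b : Fin k, a ≠ b → χ (φ a) (φ b) = R a b)).card

/-- `Nset k n R χ i x = N_i(x)` : the set of vertices `y ≠ x` lying in the image of some
injective color-preserving map `φ : Fin k → Fin n` with `φ i = x`. -/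
noncomputable def Nset (k n : ℕ) (R : Fin k → Fin k → T) (χ : Fin n → Fin n → T)
    (i : Fin k) (x : Fin n) : Finset (Fin n) :=
  (Finset.univ : Finset (Fin n)).filter
    (fun y => y ≠ x ∧ ∃ φ : Fin k → Fin n, Function.Injective φ ∧ φ i = x ∧
      (∀ a b : Fin k, a ≠ b → χ (φ a) (φ b) = R a b) ∧ ∃ a, φ a = y)

/-- `colorDeg χ x c = d_c(x)` : the number of vertices `y ≠ x` with `χ x y = c`. -/
noncomputable def colorDeg {n : ℕ} (χ : Fin n → Fin n → T) (x : Fin n) (c : T) : ℕ :=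
  ((Finset.univ : Finset (Fin n)).filter (fun y => y ≠ x ∧ χ x y = c)).card

end Defs

/-- The rainbow `k`-clique: the edge `ij` gets color `{i,j}`. -/
def rainbowClique (k : ℕ) : Fin k → Fin k → Finset (Fin k) := fun i j => {i, j}

/-- A rainbow graph `G` on `[k]`, viewed as an edge-colored complete graph: edges `ij ∈ E`
get color `{i,j}`, non-edges get color `∅`. -/
noncomputable def rainbowOf {k : ℕ} (G : SimpleGraph (Fin k)) :
    Fin k → Fin k → Finset (Fin k) :=
  fun i j => if G.Adj i j then {i, j} else ∅

/-- `B(x)` : the set of neighbors of `x`, i.e. vertices joined to `x` by a non-`∅` color. -/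
noncomputable def Bset {k n : ℕ} (χ : Fin n → Fin n → Finset (Fin k)) (x : Fin n) :
    Finset (Fin n) :=
  (Finset.univ : Finset (Fin n)).filter (fun y => y ≠ x ∧ χ x y ≠ ∅)

/-- The degree of vertex `i` in the graph `G`. -/
noncomputable def degR {k : ℕ} (G : SimpleGraph (Fin k)) (i : Fin k) : ℕ :=
  ((Finset.univ : Finset (Fin k)).filter (fun j => G.Adj i j)).card


set_option linter.unusedSectionVars false
set_option linter.unusedVariables false
set_option maxHeartbeats 1000000

section AuxProof

variable {T : Type}


noncomputable def gam (k : ℕ) (R : Fin k → Fin k → T) (t0 : T) : ℕ → ℕ → T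
  | x, y =>
    if h : 2 ≤ k ∧ x % k ≠ y % k then
      R ⟨x % k, Nat.mod_lt _ (by omega)⟩ ⟨y % k, Nat.mod_lt _ (by omega)⟩
    else if h2 : 2 ≤ k ∧ x ≠ y then
      gam k R t0 (x / k) (y / k)
    else t0
  termination_by x y => x + y
  decreasing_by
    · obtain ⟨hk, hxy⟩ := h2
      push_neg at h
      rcases Nat.eq_zero_or_pos x with hx | hx
      · subst hx
        have : y % k = 0 := by simpa using (h hk).symm
        have hy : 0 < y := by omega
        have := Nat.div_lt_self hy (by omega : 1 < k)
        simp only [Nat.zero_div]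
        omega
      · have h1 := Nat.div_lt_self hx (by omega : 1 < k)
        have h2 := Nat.div_le_self y k
        omega

lemma gam_ne (k : ℕ) (R : Fin k → Fin k → T) (t0 : T) (hk : 2 ≤ k) (x y : ℕ)
    (h : x % k ≠ y % k) :
    gam k R t0 x y = R ⟨x % k, Nat.mod_lt _ (by omega)⟩ ⟨y % k, Nat.mod_lt _ (by omega)⟩ := by
  rw [gam]
  simp [hk, h]

lemma gam_block (k : ℕ) (R : Fin k → Fin k → T) (t0 : T) (hk : 2 ≤ k) (i t s : ℕ)
    (hi : i < k) (hts : t ≠ s) :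
    gam k R t0 (i + t * k) (i + s * k) = gam k R t0 t s := by
  have hm : (i + t * k) % k = i := by
    rw [Nat.add_mul_mod_self_right, Nat.mod_eq_of_lt hi]
  have hm' : (i + s * k) % k = i := by
    rw [Nat.add_mul_mod_self_right, Nat.mod_eq_of_lt hi]
  have hne : i + t * k ≠ i + s * k := by
    intro h
    exact hts (Nat.eq_of_mul_eq_mul_right (by omega : 0 < k) (by omega))
  rw [gam]
  have hd : (i + t * k) / k = t := by
    rw [Nat.add_mul_div_right _ _ (by omega : 0 < k), Nat.div_eq_of_lt hi, Nat.zero_add]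
  have hd' : (i + s * k) / k = s := by
    rw [Nat.add_mul_div_right _ _ (by omega : 0 < k), Nat.div_eq_of_lt hi, Nat.zero_add]
  simp [hm, hm', hne, hk, hd, hd', hts, (show k ≠ 0 by omega)]

lemma gam_symm (k : ℕ) (R : Fin k → Fin k → T) (t0 : T) (hR : IsSym R) :
    ∀ x y : ℕ, gam k R t0 x y = gam k R t0 y x := by
  suffices H : ∀ n x y, x + y = n → gam k R t0 x y = gam k R t0 y x by
    intro x y; exact H _ x y rfl
  intro n
  induction n using Nat.strong_induction_on with
  | _ n ih =>
  intro x y hn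
  subst hn
  conv_lhs => rw [gam]
  conv_rhs => rw [gam]
  by_cases h : 2 ≤ k ∧ x % k ≠ y % k
  · have h' : 2 ≤ k ∧ y % k ≠ x % k := ⟨h.1, fun hh => h.2 hh.symm⟩
    rw [dif_pos h, dif_pos h']
    exact hR _ _
  · have h' : ¬(2 ≤ k ∧ y % k ≠ x % k) := fun hh => h ⟨hh.1, fun e => hh.2 e.symm⟩
    rw [dif_neg h, dif_neg h']
    by_cases h2 : 2 ≤ k ∧ x ≠ y
    · have h2' : 2 ≤ k ∧ y ≠ x := ⟨h2.1, fun e => h2.2 e.symm⟩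
      rw [dif_pos h2, dif_pos h2']
      push_neg at h
      have hk := h2.1
      have hlt : x / k + y / k < x + y := by
        rcases Nat.eq_zero_or_pos x with hx | hx
        · subst hx
          have : y % k = 0 := by simpa using (h hk).symm
          have hy : 0 < y := by omega
          have := Nat.div_lt_self hy (by omega : 1 < k)
          simp only [Nat.zero_div]
          omega
        · have h1 := Nat.div_lt_self hx (by omega : 1 < k)
          have h2 := Nat.div_le_self y k
          omega
      exact ih _ hlt _ _ rfl
    · have h2' : ¬(2 ≤ k ∧ y ≠ x) := fun hh => h2 ⟨hh.1, fun e => hh.2 e.symm⟩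
      rw [dif_neg h2, dif_neg h2']


section Blocks
variable (k n : ℕ)

def msize (i : Fin k) : ℕ := n / k + if (i : ℕ) < n % k then 1 else 0

noncomputable def blk (i : Fin k) : Finset (Fin n) :=
  (Finset.univ : Finset (Fin n)).filter (fun x => (x : ℕ) % k = (i : ℕ))

variable {k n} (hk : 2 ≤ k) (hn : k ≤ n)
include hk hn

omit hn in
lemma blk_lt (i : Fin k) (t : ℕ) (ht : t < msize k n i) : (i : ℕ) + t * k < n := by
  have hq : n = k * (n / k) + n % k := (Nat.div_add_mod n k).symm
  have hik : (i : ℕ) < k := i.2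
  unfold msize at ht
  by_cases hir : (i : ℕ) < n % k
  · rw [if_pos hir] at ht
    have h1 : t ≤ n / k := by omega
    have h2 : t * k ≤ (n / k) * k := Nat.mul_le_mul_right k h1
    have h3 : (n / k) * k = k * (n / k) := Nat.mul_comm _ _
    omega
  · rw [if_neg hir] at ht
    have h1 : t + 1 ≤ n / k := ht
    have h2 : (t + 1) * k ≤ (n / k) * k := Nat.mul_le_mul_right k h1
    have h3 : (n / k) * k = k * (n / k) := Nat.mul_comm _ _
    have h4 : (t + 1) * k = t * k + k := by ring
    have hrk : n % k < k := Nat.mod_lt _ (by omega)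
    omega

omit hk hn in
lemma mem_blk_iff (i : Fin k) (x : Fin n) : x ∈ blk k n i ↔ (x : ℕ) % k = (i : ℕ) := by
  simp [blk]

omit hn in
lemma div_lt_msize (i : Fin k) (x : Fin n) (hx : (x : ℕ) % k = (i : ℕ)) :
    (x : ℕ) / k < msize k n i := by
  have hq : n = k * (n / k) + n % k := (Nat.div_add_mod n k).symm
  have hx2 : (x : ℕ) = k * ((x : ℕ) / k) + (i : ℕ) := by
    conv_lhs => rw [← Nat.div_add_mod (x : ℕ) k]
    rw [hx]
  have hik : (i : ℕ) < k := i.2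
  have hxn : (x : ℕ) < n := x.2
  have hrk : n % k < k := Nat.mod_lt _ (by omega)
  set d := (x : ℕ) / k with hd
  set q := n / k with hq'
  unfold msize
  by_cases h1 : q + 1 ≤ d
  · exfalso
    have h2 : k * (q + 1) ≤ k * d := Nat.mul_le_mul_left k h1
    have h3 : k * (q + 1) = k * q + k := by ring
    omega
  · by_cases hir : (i : ℕ) < n % k
    · rw [if_pos hir]; omega
    · rw [if_neg hir]
      rcases Nat.lt_or_ge d q with h | h
      · exact h
      · exfalso
        have hdq : d = q := by omega
        have : k * d = k * q := by rw [hdq]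
        omega

lemma blk_card (i : Fin k) : (blk k n i).card = msize k n i := by
  classical
  rw [show msize k n i = (Finset.range (msize k n i)).card by simp]
  refine Finset.card_bij' (fun x _ => (x : ℕ) / k)
    (fun t ht => (⟨(i : ℕ) + t * k, blk_lt hk i t (Finset.mem_range.mp ht)⟩ : Fin n)) ?_ ?_ ?_ ?_
  · intro x hx
    rw [mem_blk_iff] at hx
    exact Finset.mem_range.mpr (div_lt_msize hk i x hx)
  · intro t ht
    rw [mem_blk_iff]
    simp only
    rw [Nat.add_mul_mod_self_right, Nat.mod_eq_of_lt i.2]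
  · intro x hx
    rw [mem_blk_iff] at hx
    apply Fin.ext
    simp only
    conv_rhs => rw [← Nat.div_add_mod (x : ℕ) k]
    rw [hx]; ring
  · intro t ht
    simp only
    rw [Nat.add_mul_div_right _ _ (by omega : 0 < k), Nat.div_eq_of_lt i.2, Nat.zero_add]

omit hk hn in
lemma msize_bounds (i : Fin k) : n / k ≤ msize k n i ∧ msize k n i ≤ n / k + 1 := by
  unfold msize; split <;> omega

lemma qpos : 1 ≤ n / k := (Nat.one_le_div_iff (by omega : (0:ℕ) < k)).mpr hn

lemma msize_lt (i : Fin k) : msize k n i < n := by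
  have hq : n = k * (n / k) + n % k := (Nat.div_add_mod n k).symm
  have h1 : 1 ≤ n / k := qpos hk hn
  unfold msize
  by_cases hir : (i : ℕ) < n % k
  · rw [if_pos hir]
    have : 2 * (n / k) ≤ k * (n / k) := Nat.mul_le_mul_right _ hk
    omega
  · rw [if_neg hir]
    exact Nat.div_lt_self (by omega) (by omega)

end Blocks



lemma desc_mul_q_le (q m c : ℕ) (hq : 1 ≤ q) (hm1 : q ≤ m) (hm2 : m ≤ q + 1) :
    m.descFactorial c * q ≤ m * q ^ c := by
  cases c with
  | zero => simpa using hm1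
  | succ c =>
    obtain ⟨m', rfl⟩ : ∃ m', m = m' + 1 := ⟨m - 1, by omega⟩
    rw [Nat.succ_descFactorial_succ]
    have h1 : m'.descFactorial c ≤ m' ^ c := Nat.descFactorial_le_pow _ _
    have h2 : m' ^ c ≤ q ^ c := Nat.pow_le_pow_left (by omega) c
    calc (m' + 1) * m'.descFactorial c * q ≤ (m' + 1) * q ^ c * q := by
          apply Nat.mul_le_mul_right
          exact Nat.mul_le_mul_left _ (le_trans h1 h2)
      _ = (m' + 1) * q ^ (c + 1) := by ring
  
lemma prod_desc_le {k : ℕ} (q : ℕ) (hq : 1 ≤ q) (m c : Fin k → ℕ)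
    (hm : ∀ i, q ≤ m i ∧ m i ≤ q + 1) (hc : ∑ i, c i = k) :
    ∏ i, (m i).descFactorial (c i) ≤ ∏ i, m i := by
  have H : ∏ i, ((m i).descFactorial (c i) * q) ≤ ∏ i, (m i * q ^ (c i)) :=
    Finset.prod_le_prod' (fun i _ => desc_mul_q_le q (m i) (c i) hq (hm i).1 (hm i).2)
  rw [Finset.prod_mul_distrib, Finset.prod_mul_distrib, Finset.prod_const,
    Finset.prod_pow_eq_pow_sum, hc, Finset.card_univ, Fintype.card_fin] at H
  exact Nat.le_of_mul_le_mul_right H (by positivity)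

section Patterns
variable {k n : ℕ} (hk : 2 ≤ k) (hn : k ≤ n)
include hk hn

/-- number of injections with a given block pattern is at most the product of
descending factorials. -/
lemma pattern_count_le (p : Fin k → Fin k) :
    ((Finset.univ : Finset (Fin k → Fin n)).filter
      (fun (φ : Fin k → Fin n) => Function.Injective φ ∧ ∀ a, (φ a : ℕ) % k = (p a : ℕ))).card
      ≤ ∏ i, (msize k n i).descFactorial ((Finset.univ.filter (fun a => p a = i)).card) := by
  classical
  rw [← Fintype.card_coe]
  have key : Fintype.card {φ // φ ∈ (Finset.univ : Finset (Fin k → Fin n)).filter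
      (fun (φ : Fin k → Fin n) => Function.Injective φ ∧ ∀ a, (φ a : ℕ) % k = (p a : ℕ))}
      ≤ Fintype.card (∀ i : Fin k, ({a : Fin k // p a = i} ↪ {x : Fin n // x ∈ blk k n i})) := by
    apply Fintype.card_le_of_injective
      (fun φ => fun i => ⟨fun a => ⟨φ.1 a.1, by
          simp only [blk, Finset.mem_filter, Finset.mem_univ, true_and]
          have h2 := (Finset.mem_filter.mp φ.2).2.2 a.1
          rw [h2, a.2]⟩,
        fun a b hab => by
          have hinj := (Finset.mem_filter.mp φ.2).2.1
          exact Subtype.ext (hinj (congrArg Subtype.val hab))⟩)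
    intro φ φ' h
    apply Subtype.ext
    funext a
    have := congrFun h (p a)
    have h2 := congrArg (fun e => (e ⟨a, rfl⟩ : {x : Fin n // x ∈ blk k n (p a)})) this
    exact congrArg Subtype.val h2
  refine le_trans key (le_of_eq ?_)
  rw [Fintype.card_pi]
  apply Finset.prod_congr rfl
  intro i _
  rw [Fintype.card_embedding_eq]
  congr 1
  · rw [Fintype.card_coe, blk_card hk hn]
  · rw [Fintype.card_subtype]

omit hk hn in
lemma card_inj_eq : ((Finset.univ : Finset (Fin k → Fin n)).filter
    (fun φ => Function.Injective φ)).card = n.descFactorial k := by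
  classical
  rw [← Fintype.card_coe]
  have e : {φ // φ ∈ (Finset.univ : Finset (Fin k → Fin n)).filter
      (fun φ => Function.Injective φ)} ≃ (Fin k ↪ Fin n) := by
    refine Equiv.trans (Equiv.subtypeEquiv (Equiv.refl _) ?_) (Equiv.subtypeInjectiveEquivEmbedding _ _)
    intro φ
    simp
  rw [Fintype.card_congr e, Fintype.card_embedding_eq, Fintype.card_fin, Fintype.card_fin]

end Patterns

lemma master_count (hk : 2 ≤ k) (hn : k ≤ n) :
    n.descFactorial k ≤ (k ^ k - k) * ∏ i, msize k n i + ∑ i, (msize k n i).descFactorial k := by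
  classical
  have hkpos : 0 < k := by omega
  set patt : (Fin k → Fin n) → (Fin k → Fin k) :=
    fun φ a => ⟨(φ a : ℕ) % k, Nat.mod_lt _ hkpos⟩ with hpatt
  set g : (Fin k → Fin k) → ℕ :=
    fun p => ∏ i, (msize k n i).descFactorial ((Finset.univ.filter (fun a => p a = i)).card)
    with hg
  have hsplit : ((Finset.univ : Finset (Fin k → Fin n)).filter
      (fun φ => Function.Injective φ)).card
      = ∑ p ∈ (Finset.univ : Finset (Fin k → Fin k)),
        (((Finset.univ : Finset (Fin k → Fin n)).filter (fun φ => Function.Injective φ)).filter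
          (fun φ => patt φ = p)).card :=
    Finset.card_eq_sum_card_fiberwise (fun x _ => Finset.mem_univ _)
  have hfib : ∀ p : Fin k → Fin k,
      (((Finset.univ : Finset (Fin k → Fin n)).filter (fun φ => Function.Injective φ)).filter
        (fun φ => patt φ = p)).card ≤ g p := by
    intro p
    refine le_trans (Finset.card_le_card ?_) (pattern_count_le hk hn p)
    intro φ hφ
    simp only [Finset.mem_filter, Finset.mem_univ, true_and] at hφ ⊢
    refine ⟨hφ.1, fun a => ?_⟩
    have := congrFun hφ.2 a
    exact congrArg Fin.val this
  have hgle : ∀ p : Fin k → Fin k, g p ≤ ∏ i, msize k n i := by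
    intro p
    apply prod_desc_le (n / k) (qpos hk hn)
    · exact fun i => msize_bounds i
    · exact (Finset.card_eq_sum_card_fiberwise
        (fun (a : Fin k) _ => Finset.mem_univ (p a))).symm.trans (by simp)
  -- constants
  have hconst_inj : Function.Injective (fun j : Fin k => Function.const (Fin k) j) := by
    intro a b hab
    have := congrFun hab (⟨0, hkpos⟩ : Fin k)
    simpa using this
  have hCim : (Finset.univ : Finset (Fin k → Fin k)).filter
      (fun p => ∃ j, p = Function.const (Fin k) j)
      = Finset.univ.image (fun j : Fin k => Function.const (Fin k) j) := by
    ext p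
    simp only [Finset.mem_filter, Finset.mem_univ, true_and, Finset.mem_image]
    constructor
    · rintro ⟨j, rfl⟩; exact ⟨j, rfl⟩
    · rintro ⟨j, rfl⟩; exact ⟨j, rfl⟩
  have hCcard : ((Finset.univ : Finset (Fin k → Fin k)).filter
      (fun p => ∃ j, p = Function.const (Fin k) j)).card = k := by
    rw [hCim, Finset.card_image_of_injective _ hconst_inj, Finset.card_univ, Fintype.card_fin]
  have htot : (Finset.univ : Finset (Fin k → Fin k)).card = k ^ k := by
    simp [Fintype.card_fun]
  have hNCcard : ((Finset.univ : Finset (Fin k → Fin k)).filter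
      (fun p => ¬ ∃ j, p = Function.const (Fin k) j)).card = k ^ k - k := by
    have := Finset.card_filter_add_card_filter_not
      (s := (Finset.univ : Finset (Fin k → Fin k)))
      (p := fun p => ∃ j, p = Function.const (Fin k) j)
    omega
  have hgconst : ∀ j : Fin k, g (Function.const (Fin k) j) = (msize k n j).descFactorial k := by
    intro j
    rw [hg]
    simp only
    rw [Finset.prod_eq_single j]
    · congr 1
      have : (Finset.univ.filter (fun a : Fin k => Function.const (Fin k) j a = j)) =
          Finset.univ := by
        apply Finset.filter_true_of_mem
        intro a _; rfl
      rw [this, Finset.card_univ, Fintype.card_fin]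
    · intro i _ hij
      have : (Finset.univ.filter (fun a : Fin k => Function.const (Fin k) j a = i)) = ∅ := by
        apply Finset.filter_false_of_mem
        intro a _
        simp only [Function.const_apply]
        exact fun h => hij (h ▸ rfl)
      rw [this]
      simp
    · intro h; exact absurd (Finset.mem_univ j) h
  have step1 : n.descFactorial k
      = ∑ p ∈ (Finset.univ : Finset (Fin k → Fin k)),
        (((Finset.univ : Finset (Fin k → Fin n)).filter (fun φ => Function.Injective φ)).filter
          (fun φ => patt φ = p)).card := by
    rw [← hsplit, card_inj_eq]
  have step2 : ∑ p ∈ (Finset.univ : Finset (Fin k → Fin k)),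
      (((Finset.univ : Finset (Fin k → Fin n)).filter (fun φ => Function.Injective φ)).filter
        (fun φ => patt φ = p)).card ≤ ∑ p ∈ (Finset.univ : Finset (Fin k → Fin k)), g p :=
    Finset.sum_le_sum (fun p _ => hfib p)
  have step3 : ∑ p ∈ (Finset.univ : Finset (Fin k → Fin k)), g p
      = (∑ p ∈ (Finset.univ : Finset (Fin k → Fin k)).filter
          (fun p => ∃ j, p = Function.const (Fin k) j), g p)
        + ∑ p ∈ (Finset.univ : Finset (Fin k → Fin k)).filter
          (fun p => ¬ ∃ j, p = Function.const (Fin k) j), g p :=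
    (Finset.sum_filter_add_sum_filter_not _ _ _).symm
  have step4 : ∑ p ∈ (Finset.univ : Finset (Fin k → Fin k)).filter
      (fun p => ∃ j, p = Function.const (Fin k) j), g p
      = ∑ i, (msize k n i).descFactorial k := by
    rw [hCim, Finset.sum_image (fun a _ b _ h => hconst_inj h)]
    exact Finset.sum_congr rfl (fun j _ => hgconst j)
  have step5 : ∑ p ∈ (Finset.univ : Finset (Fin k → Fin k)).filter
      (fun p => ¬ ∃ j, p = Function.const (Fin k) j), g p
      ≤ (k ^ k - k) * ∏ i, msize k n i := by
    have h6 : ∑ p ∈ (Finset.univ : Finset (Fin k → Fin k)).filter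
        (fun p => ¬ ∃ j, p = Function.const (Fin k) j), g p
        ≤ ∑ _p ∈ (Finset.univ : Finset (Fin k → Fin k)).filter
          (fun p => ¬ ∃ j, p = Function.const (Fin k) j), ∏ i, msize k n i :=
      Finset.sum_le_sum (fun p _ => hgle p)
    rw [Finset.sum_const, hNCcard, smul_eq_mul] at h6
    exact h6
  omega

section Graph
variable {k n : ℕ} (hk : 2 ≤ k) (hn : k ≤ n) (R : Fin k → Fin k → T) (t0 : T)
include hk hn

noncomputable def copySet (k n : ℕ) (R : Fin k → Fin k → T) (χ : Fin n → Fin n → T) :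
    Finset (Finset (Fin n)) :=
  ((Finset.powersetCard k (Finset.univ : Finset (Fin n))).filter
    (fun S => ∃ φ : Fin k → Fin n, Function.Injective φ ∧ (∀ a, φ a ∈ S) ∧
      ∀ a b : Fin k, a ≠ b → χ (φ a) (φ b) = R a b))

omit hk hn in
lemma copyCount_eq_card (χ : Fin n → Fin n → T) :
    copyCount k n R χ = (copySet k n R χ).card := rfl

noncomputable def chiN (k n : ℕ) (R : Fin k → Fin k → T) (t0 : T) :
    Fin n → Fin n → T := fun x y => gam k R t0 (x : ℕ) (y : ℕ)

noncomputable def embi (hk : 2 ≤ k) (i : Fin k) : Fin (msize k n i) → Fin n :=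
  fun t => ⟨(i : ℕ) + (t : ℕ) * k, blk_lt hk i (t : ℕ) t.2⟩

omit hn in
lemma embi_inj (i : Fin k) : Function.Injective (embi (n := n) hk i) := by
  intro t s h
  have h2 : (i : ℕ) + (t : ℕ) * k = (i : ℕ) + (s : ℕ) * k := congrArg Fin.val h
  exact Fin.ext (Nat.eq_of_mul_eq_mul_right (by omega : 0 < k) (by omega))

/-- the transversal copies -/
noncomputable def trA (k n : ℕ) : Finset (Finset (Fin n)) :=
  (Fintype.piFinset (fun i : Fin k => blk k n i)).image
    (fun v => Finset.image v Finset.univ)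

/-- copies within block `i` -/
noncomputable def inC (hk : 2 ≤ k) (R : Fin k → Fin k → T) (t0 : T) (i : Fin k) :
    Finset (Finset (Fin n)) :=
  (copySet k (msize k n i) R (chiN k (msize k n i) R t0)).image
    (fun S => S.image (embi hk i))

lemma trA_subset : trA k n ⊆ copySet k n R (chiN k n R t0) := by
  intro S hS
  rw [trA, Finset.mem_image] at hS
  obtain ⟨v, hv, rfl⟩ := hS
  rw [Fintype.mem_piFinset] at hv
  have hmod : ∀ i : Fin k, ((v i : ℕ)) % k = (i : ℕ) := fun i => (mem_blk_iff i (v i)).mp (hv i)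
  have hvinj : Function.Injective v := by
    intro a b hab
    apply Fin.ext
    rw [← hmod a, ← hmod b, hab]
  rw [copySet, Finset.mem_filter]
  constructor
  · rw [Finset.mem_powersetCard]
    exact ⟨Finset.subset_univ _, by
      rw [Finset.card_image_of_injective _ hvinj, Finset.card_univ, Fintype.card_fin]⟩
  · refine ⟨v, hvinj, fun a => Finset.mem_image_of_mem v (Finset.mem_univ a), ?_⟩
    intro a b hab
    have hne : (v a : ℕ) % k ≠ (v b : ℕ) % k := by
      rw [hmod a, hmod b]
      exact fun h => hab (Fin.ext h)
    rw [chiN, gam_ne k R t0 hk _ _ hne]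
    congr 1 <;> apply Fin.ext <;> simp [hmod]

lemma inC_subset (i : Fin k) : inC hk R t0 i ⊆ copySet k n R (chiN k n R t0) := by
  intro S' hS'
  rw [inC, Finset.mem_image] at hS'
  obtain ⟨S, hS, rfl⟩ := hS'
  rw [copySet, Finset.mem_filter, Finset.mem_powersetCard] at hS
  obtain ⟨⟨-, hcard⟩, φ, hφinj, hφmem, hφcol⟩ := hS
  rw [copySet, Finset.mem_filter]
  constructor
  · rw [Finset.mem_powersetCard]
    exact ⟨Finset.subset_univ _, by
      rw [Finset.card_image_of_injective _ (embi_inj hk i), hcard]⟩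
  · refine ⟨embi hk i ∘ φ, (embi_inj hk i).comp hφinj,
      fun a => Finset.mem_image_of_mem _ (hφmem a), ?_⟩
    intro a b hab
    have hne : ((φ a : ℕ)) ≠ ((φ b : ℕ)) := by
      intro h
      exact hab (hφinj (Fin.ext h))
    have := hφcol a b hab
    rw [chiN] at this ⊢
    simp only [Function.comp_apply, embi]
    rw [gam_block k R t0 hk (i : ℕ) _ _ i.2 hne]
    exact this

lemma trA_card : (trA k n).card = ∏ i, msize k n i := by
  rw [trA, Finset.card_image_of_injOn, Fintype.card_piFinset]
  · exact Finset.prod_congr rfl (fun i _ => blk_card hk hn i)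
  · intro v hv v' hv' h
    rw [Finset.mem_coe, Fintype.mem_piFinset] at hv hv'
    have h' : Finset.image v Finset.univ = Finset.image v' Finset.univ := h
    funext i
    have hmem : v i ∈ Finset.image v' Finset.univ := by
      rw [← h']
      exact Finset.mem_image_of_mem v (Finset.mem_univ i)
    obtain ⟨j, -, hj⟩ := Finset.mem_image.mp hmem
    have hij : (j : ℕ) = (i : ℕ) := by
      rw [← (mem_blk_iff j (v' j)).mp (hv' j), hj, (mem_blk_iff i (v i)).mp (hv i)]
    rw [← hj]
    congr 1
    exact Fin.ext hij

lemma inC_card (i : Fin k) :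
    (inC (n := n) hk R t0 i).card = copyCount k (msize k n i) R (chiN k (msize k n i) R t0) := by
  rw [inC, Finset.card_image_of_injective _ (Finset.image_injective (embi_inj hk i)),
    copyCount_eq_card]

lemma mem_trA_two {S : Finset (Fin n)} (hS : S ∈ trA k n) :
    ∃ x ∈ S, ∃ y ∈ S, (x : ℕ) % k ≠ (y : ℕ) % k := by
  rw [trA, Finset.mem_image] at hS
  obtain ⟨v, hv, rfl⟩ := hS
  rw [Fintype.mem_piFinset] at hv
  refine ⟨v ⟨0, by omega⟩, Finset.mem_image_of_mem v (Finset.mem_univ _),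
    v ⟨1, by omega⟩, Finset.mem_image_of_mem v (Finset.mem_univ _), ?_⟩
  rw [(mem_blk_iff _ _).mp (hv ⟨0, by omega⟩), (mem_blk_iff _ _).mp (hv ⟨1, by omega⟩)]
  simp

lemma mem_inC_mod {i : Fin k} {S : Finset (Fin n)} (hS : S ∈ inC hk R t0 i) :
    (∀ x ∈ S, (x : ℕ) % k = (i : ℕ)) ∧ S.Nonempty := by
  rw [inC, Finset.mem_image] at hS
  obtain ⟨S₀, hS₀, rfl⟩ := hS
  constructor
  · intro x hx
    rw [Finset.mem_image] at hx
    obtain ⟨t, _, rfl⟩ := hx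
    rw [embi]
    simp only
    rw [Nat.add_mul_mod_self_right, Nat.mod_eq_of_lt i.2]
  · rw [copySet, Finset.mem_filter, Finset.mem_powersetCard] at hS₀
    obtain ⟨⟨-, hcard⟩, -⟩ := hS₀
    rw [Finset.image_nonempty]
    rw [← Finset.card_pos, hcard]
    omega

lemma main_graph :
    (∏ i, msize k n i) + ∑ i, copyCount k (msize k n i) R (chiN k (msize k n i) R t0)
      ≤ copyCount k n R (chiN k n R t0) := by
  classical
  rw [copyCount_eq_card]
  have hsub : trA k n ∪ Finset.univ.biUnion (fun i => inC (n := n) hk R t0 i)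
      ⊆ copySet k n R (chiN k n R t0) := by
    apply Finset.union_subset (trA_subset hk hn R t0)
    apply Finset.biUnion_subset.mpr
    exact fun i _ => inC_subset hk hn R t0 i
  have hdisj : Disjoint (trA k n) (Finset.univ.biUnion (fun i => inC (n := n) hk R t0 i)) := by
    rw [Finset.disjoint_left]
    intro S hSA hSC
    rw [Finset.mem_biUnion] at hSC
    obtain ⟨i, -, hSi⟩ := hSC
    obtain ⟨x, hx, y, hy, hxy⟩ := mem_trA_two hk hn hSA
    obtain ⟨hmod, -⟩ := mem_inC_mod hk hn R t0 hSi
    exact hxy ((hmod x hx).trans (hmod y hy).symm)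
  have hpair : ∀ i ∈ (Finset.univ : Finset (Fin k)), ∀ j ∈ Finset.univ, i ≠ j →
      Disjoint (inC (n := n) hk R t0 i) (inC (n := n) hk R t0 j) := by
    intro i _ j _ hij
    rw [Finset.disjoint_left]
    intro S hSi hSj
    obtain ⟨hmi, hne⟩ := mem_inC_mod hk hn R t0 hSi
    obtain ⟨hmj, -⟩ := mem_inC_mod hk hn R t0 hSj
    obtain ⟨x, hx⟩ := hne
    exact hij (Fin.ext ((hmi x hx).symm.trans (hmj x hx)))
  calc (∏ i, msize k n i) + ∑ i, copyCount k (msize k n i) R (chiN k (msize k n i) R t0)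
      = (trA k n).card
        + (Finset.univ.biUnion (fun i => inC (n := n) hk R t0 i)).card := by
        rw [trA_card hk hn, Finset.card_biUnion hpair]
        congr 1
        exact Finset.sum_congr rfl (fun i _ => (inC_card hk hn R t0 i).symm)
    _ = (trA k n ∪ Finset.univ.biUnion (fun i => inC (n := n) hk R t0 i)).card :=
        (Finset.card_union_of_disjoint hdisj).symm
    _ ≤ (copySet k n R (chiN k n R t0)).card := Finset.card_le_card hsub

end Graph


lemma grand {T : Type} (k : ℕ) (hk : 2 ≤ k) (R : Fin k → Fin k → T) (t0 : T) :
    ∀ n, n.descFactorial k ≤ (k ^ k - k) * copyCount k n R (chiN k n R t0) := by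
  intro n
  induction n using Nat.strong_induction_on with
  | _ n ih =>
  by_cases hn : k ≤ n
  · have hmain := main_graph hk hn R t0
    have hnum := master_count hk hn
    have hIH : ∀ i : Fin k, (msize k n i).descFactorial k
        ≤ (k ^ k - k) * copyCount k (msize k n i) R (chiN k (msize k n i) R t0) :=
      fun i => ih _ (msize_lt hk hn i)
    calc n.descFactorial k
        ≤ (k ^ k - k) * (∏ i, msize k n i) + ∑ i, (msize k n i).descFactorial k := hnum
      _ ≤ (k ^ k - k) * (∏ i, msize k n i)
          + ∑ i, (k ^ k - k) * copyCount k (msize k n i) R (chiN k (msize k n i) R t0) :=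
          Nat.add_le_add_left (Finset.sum_le_sum (fun i _ => hIH i)) _
      _ = (k ^ k - k) * ((∏ i, msize k n i)
          + ∑ i, copyCount k (msize k n i) R (chiN k (msize k n i) R t0)) := by
          rw [Nat.mul_add, Finset.mul_sum]
      _ ≤ (k ^ k - k) * copyCount k n R (chiN k n R t0) :=
          Nat.mul_le_mul_left _ hmain
  · have h0 : n.descFactorial k = 0 := by
      apply Nat.descFactorial_eq_zero_iff_lt.mpr
      omega
    rw [h0]
    exact Nat.zero_le _

end AuxProof

/-- For every `k ≥ 2`, every finite color set `T`, every `k`-vertex `T`-colored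
complete graph `R` and every `n ≥ k`, `I(R,n) ≥ (k!/(k^k − k))·binom(n,k)`. -/
theorem inducibility_lower_bound {T : Type} [Fintype T] (k n : ℕ) (hk : 2 ≤ k) (hn : k ≤ n)
    (R : Fin k → Fin k → T) (hR : IsSym R) :
    ((k.factorial : ℝ) / ((k : ℝ) ^ k - k)) * (n.choose k : ℝ) ≤ (maxCopyCount k n R : ℝ) := by
  
  classical
  set t0 : T := R ⟨0, by omega⟩ ⟨0, by omega⟩ with ht0
  have hsym : IsSym (chiN k n R t0) := fun u v => gam_symm k R t0 hR (u : ℕ) (v : ℕ)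
  have hmem : chiN k n R t0 ∈ (Finset.univ : Finset (Fin n → Fin n → T)).filter
      (fun χ => IsSym χ) := Finset.mem_filter.mpr ⟨Finset.mem_univ _, hsym⟩
  have hle : copyCount k n R (chiN k n R t0) ≤ maxCopyCount k n R :=
    Finset.le_sup (f := fun χ => copyCount k n R χ) hmem
  have hNat : n.descFactorial k ≤ (k ^ k - k) * maxCopyCount k n R :=
    le_trans (grand k hk R t0 n) (Nat.mul_le_mul_left _ hle)
  have hkk : k < k ^ k := (Nat.lt_pow_self (by omega : 1 < k) : k < k ^ k)
  have hcast : (((k ^ k - k : ℕ)) : ℝ) = (k : ℝ) ^ k - (k : ℝ) := by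
    rw [Nat.cast_sub (le_of_lt hkk)]
    push_cast
    ring
  have hpos : (0 : ℝ) < (k : ℝ) ^ k - (k : ℝ) := by
    rw [← hcast]
    have : 0 < k ^ k - k := by omega
    exact_mod_cast this
  rw [div_mul_eq_mul_div, div_le_iff₀ hpos]
  have hR2 : ((n.descFactorial k : ℕ) : ℝ) ≤ (((k ^ k - k) * maxCopyCount k n R : ℕ) : ℝ) :=
    Nat.cast_le.mpr hNat
  rw [Nat.descFactorial_eq_factorial_mul_choose] at hR2
  push_cast at hR2
  rw [← hcast]
  push_cast
  calc (k.factorial : ℝ) * (n.choose k : ℝ)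
      ≤ (((k ^ k - k : ℕ)) : ℝ) * (maxCopyCount k n R : ℝ) := by
        convert hR2 using 2 <;> push_cast <;> ring
    _ = (maxCopyCount k n R : ℝ) * (((k ^ k - k : ℕ)) : ℝ) := by ring
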